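/- |h − c(1 + V₀)| ≤ r₀³ (V₀')² / (2(1 + V₀)). -/

import Mathlib

theorem stmt_2
    (c : ℝ) (hc : 0 < c)
    (V V' V'' : ℝ → ℝ)
    (hV1 : ∀ x ∈ Set.Icc (-c) c, HasDerivAt V (V' x) x)
    (hV2 : ∀ x ∈ Set.Icc (-c) c, HasDerivAt V' (V'' x) x)
    (hV2c : ContinuousOn V'' (Set.Icc (-c) c))
    (hVnn : ∀ x ∈ Set.Icc (-c) c, 0 ≤ V x)
    (r v : ℝ → ℝ)
    (hr : ∀ x, r x = Real.sqrt (c ^ 2 - x ^ 2))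
    (hv : ∀ x, v x = r x * (1 + V x))
    (z₀ : ℝ) (hz₀ : z₀ ∈ Set.Ioo (-c) c)
    (hmax : ∀ x ∈ Set.Icc (-c) c, v x ≤ v z₀)
    :
    |v z₀ - c * (1 + V z₀)| ≤ (r z₀) ^ 3 * (V' z₀) ^ 2 / (2 * (1 + V z₀)) := by
  obtain ⟨hz1, hz2⟩ := hz₀
  have hzIcc : z₀ ∈ Set.Icc (-c) c := ⟨le_of_lt hz1, le_of_lt hz2⟩
  have hpos : 0 < c ^ 2 - z₀ ^ 2 := by nlinarith
  have hr0 : 0 < r z₀ := by rw [hr]; exact Real.sqrt_pos.mpr hpos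
  have hrsq : (r z₀) ^ 2 = c ^ 2 - z₀ ^ 2 := by
    rw [hr]; exact Real.sq_sqrt hpos.le
  have hrle : r z₀ ≤ c := by nlinarith
  have hA : 0 < 1 + V z₀ := by have := hVnn z₀ hzIcc; linarith
  -- derivative of r at z₀
  have hinner : HasDerivAt (fun x : ℝ => c ^ 2 - x ^ 2) (-(2 * z₀)) z₀ := by
    simpa using (hasDerivAt_pow 2 z₀).const_sub (c ^ 2)
  have hne : c ^ 2 - z₀ ^ 2 ≠ 0 := ne_of_gt hpos
  have hrd : HasDerivAt r (-z₀ / r z₀) z₀ := by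
    have h := (Real.hasDerivAt_sqrt hne).comp z₀ hinner
    have heq : (fun x : ℝ => Real.sqrt (c ^ 2 - x ^ 2)) = r := by
      funext x; rw [hr]
    simp only [Function.comp_def] at h
    rw [heq] at h
    refine h.congr_deriv ?_
    rw [hr]
    field_simp
  have hVd : HasDerivAt (fun x => 1 + V x) (V' z₀) z₀ := (hV1 z₀ hzIcc).const_add 1
  have hvd : HasDerivAt v (-z₀ / r z₀ * (1 + V z₀) + r z₀ * V' z₀) z₀ := by
    have h := hrd.mul hVd
    have heq : (fun x : ℝ => r x * (1 + V x)) = v := by funext x; rw [hv]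
    rw [← heq]; exact h
  have hloc : IsLocalMax v z₀ := by
    have hmem : Set.Icc (-c) c ∈ nhds z₀ := Icc_mem_nhds hz1 hz2
    exact Filter.eventually_of_mem hmem hmax
  have hzero := hloc.hasDerivAt_eq_zero hvd
  have hkey : z₀ * (1 + V z₀) = (r z₀) ^ 2 * V' z₀ := by
    field_simp at hzero
    nlinarith [hzero]
  rw [hv]
  have habs : |r z₀ * (1 + V z₀) - c * (1 + V z₀)| = (c - r z₀) * (1 + V z₀) := by
    rw [abs_sub_comm, abs_of_nonneg]
    · ring
    · nlinarith
  rw [habs, le_div_iff₀ (by linarith)]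
  have h2 : (r z₀)^4 * (V' z₀)^2 = z₀^2 * (1 + V z₀)^2 := by
    rw [show (r z₀)^4 * (V' z₀)^2 = ((r z₀)^2 * V' z₀)^2 from by ring, ← hkey]; ring
  nlinarith [h2, hrsq, sq_nonneg ((c - r z₀) * (1 + V z₀)), mul_pos hr0 hA, hr0]
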